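/- Suppose for every real x > 396738 there is a prime in the interval (x, x + x/(25 ln² x)). Then for all n with p_n > 396738, (ln p_{n+1})³ - (ln p_n)³ < 3/25. -/

import Mathlib

set_option maxHeartbeats 800000

/-- `prime n` is the n-th prime, with `prime 1 = 2`. -/
noncomputable def prime (n : ℕ) : ℕ := Nat.nth Nat.Prime (n - 1)

lemma log_one_add_le' (t : ℝ) (h0 : 0 ≤ t) (h1 : t ≤ 1) :
    Real.log (1 + t) ≤ t - t^2/8 := by
  have key : 1 + t ≤ Real.exp (t - t^2/8) := by
    set s := t - t^2/8 with hsdef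
    have hs : 0 ≤ s := by rw [hsdef]; nlinarith
    have h2 : (1 + s/2)^2 ≤ Real.exp (s/2) ^ 2 := by
      apply pow_le_pow_left₀ (by positivity) (by linarith [Real.add_one_le_exp (s/2)])
    have h3 : Real.exp (s/2) ^ 2 = Real.exp s := by
      rw [sq, ← Real.exp_add]; ring_nf
    nlinarith [h2, h3]
  calc Real.log (1+t) ≤ Real.log (Real.exp (t - t^2/8)) :=
        Real.log_le_log (by linarith) key
    _ = _ := Real.log_exp _

theorem log_pow_three_bound
    (h : ∀ x : ℝ, 396738 < x →
      ∃ q : ℕ, q.Prime ∧ x < q ∧ (q : ℝ) < x + x / (25 * Real.log x ^ 2)) :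
    ∀ n : ℕ, 396738 < (prime n : ℝ) →
      Real.log (prime (n+1)) ^ 3 - Real.log (prime n) ^ 3 < 3/25 := by
  intro n hn
  obtain ⟨q, hqp, hq1, hq2⟩ := h (prime n) hn
  have hPpos : (0:ℝ) < (prime n : ℝ) := by linarith
  set L : ℝ := Real.log (prime n) with hLdef
  have he12 : Real.exp 12 < 396738 := by
    have h9 := Real.exp_one_lt_d9
    have h0 := Real.exp_pos 1
    calc Real.exp 12 = Real.exp 1 ^ 12 := by rw [← Real.exp_nat_mul]; norm_num
      _ < 2.7182818286 ^ 12 := pow_lt_pow_left₀ h9 h0.le (by norm_num)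
      _ < 396738 := by norm_num
  have hL : 12 < L := by
    rw [hLdef, ← Real.exp_lt_exp (x := 12), Real.exp_log hPpos]
    linarith
  clear_value L
  have hL0 : (0:ℝ) < L := by linarith
  have hn1 : 1 ≤ n := by
    rcases Nat.eq_zero_or_pos n with h0 | h0
    · subst h0
      simp only [prime, Nat.zero_sub, Nat.nth_prime_zero_eq_two] at hn
      norm_num at hn
    · exact h0
  have hQle : prime (n+1) ≤ q := by
    have hk := Nat.nth_count (p := Nat.Prime) hqp
    have h1 : Nat.nth Nat.Prime (n-1) < Nat.nth Nat.Prime (Nat.count Nat.Prime q) := by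
      rw [hk]; exact_mod_cast hq1
    have h2 : n - 1 < Nat.count Nat.Prime q :=
      (Nat.nth_lt_nth Nat.infinite_setOf_prime).1 h1
    have h3 : n ≤ Nat.count Nat.Prime q := by omega
    calc prime (n+1) = Nat.nth Nat.Prime n := by simp [prime]
      _ ≤ Nat.nth Nat.Prime (Nat.count Nat.Prime q) :=
          (Nat.nth_le_nth Nat.infinite_setOf_prime).2 h3
      _ = q := hk
  set t : ℝ := 1 / (25 * L^2) with htdef
  have ht0 : 0 < t := by rw [htdef]; positivity
  have ht1 : t ≤ 1 := by
    rw [htdef, div_le_one (by positivity)]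
    nlinarith
  have hLt : L^2 * t = 1/25 := by
    rw [htdef]; field_simp
  have hsplit : (prime n : ℝ) + (prime n : ℝ) / (25 * L^2) = (prime n : ℝ) * (1 + t) := by
    rw [htdef]; field_simp
  clear_value t
  have hQlt : ((prime (n+1) : ℝ)) < (prime n : ℝ) * (1 + t) := by
    have hqQ : ((prime (n+1) : ℝ)) ≤ (q : ℝ) := by exact_mod_cast hQle
    linarith [hsplit ▸ hq2]
  have hQpos : (0:ℝ) < (prime (n+1) : ℝ) := by
    exact_mod_cast (Nat.prime_nth_prime n).pos
  have hQ1 : (1:ℝ) ≤ (prime (n+1) : ℝ) := by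
    exact_mod_cast (Nat.prime_nth_prime n).one_lt.le
  have hlogQ : Real.log (prime (n+1)) < L + (t - t^2/8) := by
    have h1 : Real.log (prime (n+1)) < Real.log ((prime n : ℝ) * (1 + t)) :=
      Real.log_lt_log hQpos hQlt
    rw [Real.log_mul (ne_of_gt hPpos) (by positivity), ← hLdef] at h1
    have h2 := log_one_add_le' t ht0.le ht1
    linarith
  have hlogQ0 : 0 ≤ Real.log (prime (n+1)) := Real.log_nonneg hQ1
  have hcube : Real.log (prime (n+1)) ^ 3 < (L + (t - t^2/8))^3 :=
    pow_lt_pow_left₀ hlogQ hlogQ0 (by norm_num)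
  have hd0 : 0 ≤ t - t^2/8 := by nlinarith
  have hdt : t - t^2/8 ≤ t := by nlinarith [sq_nonneg t]
  have hsq : (t - t^2/8)^2 ≤ t^2 := pow_le_pow_left₀ hd0 hdt 2
  have hcub : (t - t^2/8)^3 ≤ t^3 := pow_le_pow_left₀ hd0 hdt 3
  have ht3 : t^3 ≤ t^2 := by nlinarith
  have h1 : 3*L*(t - t^2/8)^2 + (t - t^2/8)^3 ≤ 3*L*t^2 + t^2 := by
    have := mul_le_mul_of_nonneg_left hsq (by linarith : (0:ℝ) ≤ 3*L)
    linarith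
  have hA : 3*L + 1 ≤ (3/8)*L^2 := by linarith [sq_nonneg (L-12)]
  have h2 : 3*L*t^2 + t^2 ≤ (3/8)*L^2*t^2 := by
    nlinarith [mul_le_mul_of_nonneg_right hA (sq_nonneg t)]
  have key : (L + (t - t^2/8))^3 ≤ L^3 + 3/25 := by nlinarith [h1, h2, hLt]
  linarith
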